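/- Let q ≥ 3 be an odd integer and let Pₙ be the polynomials defined by P₀(x) = 1, P₁(x) = x, P_{n+1}(x) = ((q+1)/q)·x·Pₙ(x) − (1/q)·P_{n−1}(x). Then for every n ∈ ℕ and every s ∈ [−1,1), (1 − Pₙ(s))/(1 − s) ≤ P'ₙ(1), where P'ₙ denotes the derivative of Pₙ. (Equivalently, on the free group F_r with q = 2r − 1, ψ_s(x) ≤ ψ₁(x) for all s ∈ [−1,1] and all x ∈ F_r, where ψ_s(x) = (1 − φ_s(x))/(1 − s) and ψ₁(x) = P'_{|x|}(1).) -/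

import Mathlib

noncomputable section

/-- The spherical polynomials `Pₙ` for the parameter `q`:
`P₀ = 1`, `P₁ = X`, `P_{n+2}(x) = ((q+1)/q)·x·P_{n+1}(x) − (1/q)·Pₙ(x)`. -/
def P (q : ℝ) : ℕ → ℝ → ℝ
  | 0 => fun _ => 1
  | 1 => fun s => s
  | (n + 2) => fun s => ((q + 1) / q) * s * P q (n + 1) s - (1 / q) * P q n s

namespace PsiAux

lemma P_rec (q : ℝ) (n : ℕ) (s : ℝ) :
    P q (n+2) s = ((q + 1) / q) * s * P q (n + 1) s - (1 / q) * P q n s := rfl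
lemma P_zero (q s : ℝ) : P q 0 s = 1 := rfl
lemma P_one' (q s : ℝ) : P q 1 s = s := rfl
lemma P_fun0 (q : ℝ) : P q 0 = fun _ => 1 := rfl
lemma P_fun1 (q : ℝ) : P q 1 = fun s => s := rfl
lemma P_fun2 (q : ℝ) (n : ℕ) :
    P q (n+2) = fun s => ((q + 1) / q) * s * P q (n + 1) s - (1 / q) * P q n s := rfl

/-- Energy identity for the recurrence. -/
lemma energy (q : ℝ) (hq : 3 ≤ q) (s : ℝ) : ∀ n : ℕ,
    (P q (n+1) s)^2 - ((q+1)/q) * s * P q n s * P q (n+1) s + (1/q) * (P q n s)^2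
      = (1/q)^(n+1) * (1 - s^2) := by
  have hq0 : q ≠ 0 := by linarith
  intro n
  induction n with
  | zero =>
    rw [P_zero, P_one']
    field_simp
    linear_combination (s^2 - 1) * mul_inv_cancel₀ hq0
  | succ n ih =>
    rw [P_rec]
    linear_combination (1/q) * ih

/-- Parity of `Pₙ`. -/
lemma P_neg (q s : ℝ) : ∀ n : ℕ, P q n (-s) = (-1)^n * P q n s ∧
    P q (n+1) (-s) = (-1)^(n+1) * P q (n+1) s := by
  intro n
  induction n with
  | zero => refine ⟨by rw [P_zero, P_zero]; ring, by rw [P_one', P_one']; ring⟩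
  | succ n ih =>
    refine ⟨ih.2, ?_⟩
    rw [P_rec, P_rec, ih.1, ih.2]
    ring

lemma mid_step (b s x y c : ℝ) (hb0 : 0 < b) (hb3 : b ≤ 1/3)
    (hs2 : s^2 ≤ 1) (hx2 : x^2 ≤ 1) (hmid : ((1+b)*s)^2 ≤ 4*b)
    (hcb : c ≤ b)
    (en : y^2 - (1+b)*s*x*y + b*x^2 = c*(1-s^2)) : y^2 ≤ 1 := by
  have hr2 : (y - (1+b)*s*x/2)^2 ≤ b*(1-s^2) := by
    nlinarith [en, mul_nonneg (by linarith : (0:ℝ) ≤ 4*b - ((1+b)*s)^2) (sq_nonneg x),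
      mul_le_mul_of_nonneg_right hcb (by linarith : (0:ℝ) ≤ 1 - s^2)]
  have key : y^2 ≤ ((1+b)*s*x)^2/2 + 2*((y - (1+b)*s*x/2)^2) := by
    nlinarith [sq_nonneg ((1+b)*s*x - y)]
  have hxs : ((1+b)*s*x)^2 ≤ ((1+b)*s)^2 := by
    nlinarith [mul_nonneg (sq_nonneg ((1+b)*s)) (by linarith : (0:ℝ) ≤ 1 - x^2)]
  have h2 : ((1+b)*s)^2/2 + 2*(b*(1-s^2)) ≤ 1 := by
    nlinarith [mul_nonneg (by linarith : (0:ℝ) ≤ 1 - s^2) (sq_nonneg (1 - b)),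
      mul_nonneg hb0.le (by linarith : (0:ℝ) ≤ 1/3 - b)]
  linarith

/-- Boundedness of `Pₙ` in the middle (elliptic) region. -/
lemma abs_P_mid (q : ℝ) (hq : 3 ≤ q) (s : ℝ) (hs1 : -1 ≤ s) (hs2 : s ≤ 1)
    (hmid : ((1 + 1/q) * s)^2 ≤ 4 * (1/q)) : ∀ n, |P q n s| ≤ 1 := by
  have hq0 : (0:ℝ) < q := by linarith
  have hb0 : (0:ℝ) < 1/q := by positivity
  have hb3 : 1/q ≤ 1/3 := by rw [div_le_div_iff₀ hq0 (by norm_num)]; linarith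
  have hab : (q+1)/q = 1 + 1/q := by field_simp
  intro n
  induction n with
  | zero => rw [P_zero]; norm_num
  | succ n ih =>
    have en := energy q hq s n
    rw [hab] at en
    have hx1 := abs_le.mp ih
    have hx2 : (P q n s)^2 ≤ 1 := by nlinarith [hx1.1, hx1.2]
    have hs2' : s^2 ≤ 1 := by nlinarith
    have hpow : (1/q)^(n+1) ≤ 1/q := by
      calc (1/q)^(n+1) ≤ (1/q)^1 := by
            apply pow_le_pow_of_le_one (le_of_lt hb0) (by linarith) (by omega)
        _ = 1/q := pow_one _
    have hy2 : (P q (n+1) s)^2 ≤ 1 :=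
      mid_step (1/q) s (P q n s) (P q (n+1) s) ((1/q)^(n+1)) hb0 hb3 hs2' hx2 hmid
        hpow en
    rw [abs_le]
    constructor <;> nlinarith [hy2]

/-- Positivity propagation for sequences satisfying the inhomogeneous recurrence,
in the high (hyperbolic) region. -/
lemma seq_key (b s : ℝ) (hb : 0 < b) (hs0 : 0 ≤ s) (hs1 : s ≤ 1)
    (hhigh : 4 * b ≤ ((1+b) * s)^2) (u : ℕ → ℝ)
    (hrec : ∀ n, u (n+2) = (1+b) * s * u (n+1) - b * u n + (1+b) * (1 - s))
    (h0 : 0 ≤ u 0) (h1 : (1+b) * s / 2 * u 0 ≤ u 1) :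
    ∀ n, 0 ≤ u n ∧ (1+b) * s / 2 * u n ≤ u (n+1) := by
  intro n
  induction n with
  | zero => exact ⟨h0, h1⟩
  | succ n ih =>
    obtain ⟨hn, hn1⟩ := ih
    have has : 0 ≤ (1+b) * s := by positivity
    have hun1 : 0 ≤ u (n+1) := le_trans (by positivity) hn1
    refine ⟨hun1, ?_⟩
    have hr := hrec n
    nlinarith [mul_le_mul_of_nonneg_left hn1 (by positivity : (0:ℝ) ≤ (1+b)*s/2),
      mul_nonneg (by nlinarith : (0:ℝ) ≤ ((1+b)*s)^2/4 - b) hn,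
      mul_nonneg (by positivity : (0:ℝ) ≤ (1+b)) (by linarith : (0:ℝ) ≤ 1 - s)]

/-- Boundedness of `Pₙ` in the high region. -/
lemma abs_P_high (q : ℝ) (hq : 3 ≤ q) (s : ℝ) (hs0 : 0 ≤ s) (hs2 : s ≤ 1)
    (hhigh : 4 * (1/q) ≤ ((1 + 1/q) * s)^2) : ∀ n, |P q n s| ≤ 1 := by
  have hq0 : (0:ℝ) < q := by linarith
  have hb0 : (0:ℝ) < 1/q := by positivity
  have hab : (q+1)/q = 1 + 1/q := by field_simp
  have hrecu : ∀ n, (1 - P q (n+2) s) = (1 + 1/q) * s * (1 - P q (n+1) s)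
      - (1/q) * (1 - P q n s) + (1 + 1/q) * (1 - s) := by
    intro n; rw [P_rec, hab]; ring
  have hrecv : ∀ n, (1 + P q (n+2) s) = (1 + 1/q) * s * (1 + P q (n+1) s)
      - (1/q) * (1 + P q n s) + (1 + 1/q) * (1 - s) := by
    intro n; rw [P_rec, hab]; ring
  have hu := seq_key (1/q) s hb0 hs0 hs2 hhigh (fun n => 1 - P q n s) hrecu
    (by show (0:ℝ) ≤ 1 - P q 0 s; rw [P_zero]; norm_num)
    (by show (1 + 1/q) * s / 2 * (1 - P q 0 s) ≤ 1 - P q 1 s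
        rw [P_zero, P_one']; norm_num; linarith)
  have hv := seq_key (1/q) s hb0 hs0 hs2 hhigh (fun n => 1 + P q n s) hrecv
    (by show (0:ℝ) ≤ 1 + P q 0 s; rw [P_zero]; norm_num) ?_
  · intro n
    have h1 := (hu n).1
    have h2 := (hv n).1
    rw [abs_le]; constructor <;> linarith
  · show (1 + 1/q) * s / 2 * (1 + P q 0 s) ≤ 1 + P q 1 s
    rw [P_zero, P_one']
    have hbs : (1/q) * s ≤ 1 := by
      calc (1/q) * s ≤ (1/q) * 1 := by nlinarith
        _ ≤ 1 := by rw [mul_one]; rw [div_le_one hq0]; linarith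
    nlinarith

/-- `|Pₙ(s)| ≤ 1` on `[0, 1]`. -/
lemma abs_P_le_nonneg (q : ℝ) (hq : 3 ≤ q) (s : ℝ) (hs0 : 0 ≤ s) (hs2 : s ≤ 1)
    (n : ℕ) : |P q n s| ≤ 1 := by
  rcases le_total (((1 + 1/q) * s)^2) (4 * (1/q)) with hm | hh
  · exact abs_P_mid q hq s (by linarith) hs2 hm n
  · exact abs_P_high q hq s hs0 hs2 hh n

/-- `|Pₙ(s)| ≤ 1` on `[-1, 1]`. -/
lemma abs_P_le (q : ℝ) (hq : 3 ≤ q) (s : ℝ) (hs1 : -1 ≤ s) (hs2 : s ≤ 1) (n : ℕ) :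
    |P q n s| ≤ 1 := by
  rcases le_total 0 s with h0 | h0
  · exact abs_P_le_nonneg q hq s h0 hs2 n
  · have hp := (P_neg q (-s) n).1
    rw [neg_neg] at hp
    rw [hp, abs_mul, abs_pow, abs_neg, abs_one, one_pow, one_mul]
    exact abs_P_le_nonneg q hq (-s) (by linarith) (by linarith) n

lemma P_at_one (q : ℝ) (hq0 : q ≠ 0) : ∀ n : ℕ, P q n 1 = 1 ∧ P q (n+1) 1 = 1 := by
  intro n
  induction n with
  | zero => exact ⟨rfl, rfl⟩
  | succ n ih =>
    refine ⟨ih.2, ?_⟩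
    rw [P_rec, ih.1, ih.2]
    field_simp
    ring

lemma P_diff (q : ℝ) : ∀ n : ℕ, Differentiable ℝ (P q n) ∧ Differentiable ℝ (P q (n+1)) := by
  intro n
  induction n with
  | zero =>
    constructor
    · rw [P_fun0]; exact differentiable_const 1
    · rw [P_fun1]; exact differentiable_id
  | succ n ih =>
    refine ⟨ih.2, ?_⟩
    rw [P_fun2]
    exact ((differentiable_id.const_mul _).mul ih.2).sub (ih.1.const_mul _)

lemma deriv_rec (q : ℝ) (hq0 : q ≠ 0) (n : ℕ) :
    deriv (P q (n+2)) 1 = (q+1)/q + ((q+1)/q) * deriv (P q (n+1)) 1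
      - (1/q) * deriv (P q n) 1 := by
  have h1 := (P_diff q n).1
  have h2 := (P_diff q n).2
  rw [P_fun2]
  rw [deriv_fun_sub (((differentiableAt_fun_id.const_mul _).fun_mul (h2 1))) ((h1 1).const_mul _)]
  rw [deriv_fun_mul (differentiableAt_fun_id.const_mul _) (h2 1)]
  rw [deriv_const_mul _ differentiableAt_fun_id, deriv_const_mul _ (h1 1)]
  simp [(P_at_one q hq0 n).2]

/-- The key strengthened induction. -/
lemma main_ineq (q : ℝ) (hq : 3 ≤ q) (s : ℝ) (hs1 : -1 ≤ s) (hs2 : s < 1) : ∀ n : ℕ,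
    0 ≤ (1 - s) * deriv (P q n) 1 - (1 - P q n s) ∧
    (1/q) * ((1 - s) * deriv (P q n) 1 - (1 - P q n s)) ≤
      (1 - s) * deriv (P q (n+1)) 1 - (1 - P q (n+1) s) := by
  have hq0 : (0:ℝ) < q := by linarith
  have hq0' : q ≠ 0 := ne_of_gt hq0
  have hd0 : deriv (P q 0) 1 = 0 := by rw [P_fun0]; simp
  have hd1 : deriv (P q 1) 1 = 1 := by rw [P_fun1]; simp
  intro n
  induction n with
  | zero =>
    rw [hd0, hd1, P_zero, P_one']
    norm_num
  | succ n ih =>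
    obtain ⟨h1, h2⟩ := ih
    have hG1 : 0 ≤ (1 - s) * deriv (P q (n+1)) 1 - (1 - P q (n+1) s) := by
      have := mul_nonneg (by positivity : (0:ℝ) ≤ 1/q) h1
      linarith
    refine ⟨hG1, ?_⟩
    have hA : (1 - s) * deriv (P q n) 1 - (1 - P q n s) ≤
        q * ((1 - s) * deriv (P q (n+1)) 1 - (1 - P q (n+1) s)) := by
      have := mul_le_mul_of_nonneg_left h2 (le_of_lt hq0)
      calc (1 - s) * deriv (P q n) 1 - (1 - P q n s)
          = q * ((1/q) * ((1 - s) * deriv (P q n) 1 - (1 - P q n s))) := by field_simp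
        _ ≤ q * ((1 - s) * deriv (P q (n+1)) 1 - (1 - P q (n+1) s)) := this
    have hB : 0 ≤ (q+1) * (1 - s) * (1 - P q (n+1) s) := by
      have hu : P q (n+1) s ≤ 1 := (abs_le.mp (abs_P_le q hq s hs1 (le_of_lt hs2) (n+1))).2
      have : (0:ℝ) ≤ q + 1 := by linarith
      apply mul_nonneg (mul_nonneg this (by linarith)) (by linarith)
    have heqd : q * deriv (P q (n+2)) 1 = (q+1) + (q+1) * deriv (P q (n+1)) 1
        - deriv (P q n) 1 := by
      rw [deriv_rec q hq0' n]; field_simp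
    have heqd' : (1 - s) * (q * deriv (P q (n+2)) 1)
        = (1 - s) * ((q+1) + (q+1) * deriv (P q (n+1)) 1 - deriv (P q n) 1) := by
      rw [heqd]
    have heqp : q * P q (n+2) s = (q+1) * s * P q (n+1) s - P q n s := by
      rw [P_rec]; field_simp
    rw [one_div, inv_mul_le_iff₀ hq0]
    nlinarith [hA, hB, heqd', heqp]

end PsiAux

theorem psi_s_le_psi_one (q : ℕ) (hq3 : 3 ≤ q) (hqodd : Odd q) (n : ℕ)
    (s : ℝ) (hs : s ∈ Set.Ico (-1 : ℝ) 1) :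
    (1 - P (q : ℝ) n s) / (1 - s) ≤ deriv (P (q : ℝ) n) 1 := by
  obtain ⟨hs1, hs2⟩ := hs
  have hq : (3:ℝ) ≤ (q:ℝ) := by exact_mod_cast hq3
  have h := (PsiAux.main_ineq (q:ℝ) hq s hs1 hs2 n).1
  rw [div_le_iff₀ (by linarith : (0:ℝ) < 1 - s)]
  linarith
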